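/- Let μ₁ > μ₂ be real numbers and c₁, c₂ > 0. Then sup_{w₁ ∈ [0,1]} inf_{λ₁ ≤ λ₂} [ (w₁/c₁)·(μ₁ − λ₁)²/2 + ((1−w₁)/c₂)·(μ₂ − λ₂)²/2 ] = (μ₁ − μ₂)² / (2(√c₁ + √c₂)²), and the supremum is attained at w₁ = √c₁/(√c₁ + √c₂). (Closed form of T*(μ)⁻¹ for a two-armed unit-variance Gaussian bandit, as in Corollary 2.) -/

import Mathlib

/-- closed form of `T*(μ)⁻¹` for a two-armed unit-variance
Gaussian bandit (Corollary 2): the sup over `w₁ ∈ [0,1]` of the inf over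
`λ₁ ≤ λ₂` of the cost-weighted transportation cost equals
`(μ₁−μ₂)²/(2(√c₁+√c₂)²)`, and the supremum is attained at
`w₁ = √c₁/(√c₁+√c₂)`. -/
lemma inf_eq_aux (μ₁ μ₂ A B : ℝ) (hμ : μ₂ < μ₁) (hA : 0 ≤ A) (hB : 0 ≤ B) (hAB : 0 < A + B) :
    (⨅ lam : {p : ℝ × ℝ // p.1 ≤ p.2},
      (A * (μ₁ - lam.1.1) ^ 2 / 2 + B * (μ₂ - lam.1.2) ^ 2 / 2))
    = A * B / (A + B) * (μ₁ - μ₂) ^ 2 / 2 := by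
  have hABne : A + B ≠ 0 := ne_of_gt hAB
  haveI : Nonempty {p : ℝ × ℝ // p.1 ≤ p.2} := ⟨⟨(0,0), le_rfl⟩⟩
  have hbdd : BddBelow (Set.range fun lam : {p : ℝ × ℝ // p.1 ≤ p.2} =>
      A * (μ₁ - lam.1.1) ^ 2 / 2 + B * (μ₂ - lam.1.2) ^ 2 / 2) := by
    refine ⟨0, ?_⟩
    rintro x ⟨lam, rfl⟩
    have := sq_nonneg (μ₁ - lam.1.1)
    have := sq_nonneg (μ₂ - lam.1.2)
    positivity
  apply le_antisymm
  · have hle := ciInf_le hbdd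
      (⟨((A*μ₁+B*μ₂)/(A+B), (A*μ₁+B*μ₂)/(A+B)), le_rfl⟩ : {p : ℝ × ℝ // p.1 ≤ p.2})
    refine hle.trans (le_of_eq ?_)
    field_simp
    ring
  · apply le_ciInf
    rintro ⟨⟨l1, l2⟩, hl⟩
    simp only
    have hxy : μ₁ - μ₂ ≤ (μ₁ - l1) - (μ₂ - l2) := by linarith
    have hΔ : (0:ℝ) < μ₁ - μ₂ := by linarith
    have hsq : (μ₁ - μ₂)^2 ≤ ((μ₁ - l1) - (μ₂ - l2))^2 := by nlinarith
    have h2 : A * B / (A + B) * (μ₁ - μ₂) ^ 2 / 2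
        = A * B * (μ₁ - μ₂) ^ 2 / 2 / (A + B) := by ring
    rw [h2, div_le_iff₀ hAB]
    nlinarith [sq_nonneg (A*(μ₁-l1) + B*(μ₂-l2)), mul_nonneg hA hB,
      mul_le_mul_of_nonneg_left hsq (mul_nonneg hA hB)]

theorem two_arm_Tstar_closed_form
    (μ₁ μ₂ c₁ c₂ : ℝ)
    (hμ : μ₂ < μ₁)
    (hc₁ : 0 < c₁) (hc₂ : 0 < c₂) :
    IsGreatest
      {x : ℝ | ∃ w ∈ Set.Icc (0 : ℝ) 1,
        x = ⨅ lam : {p : ℝ × ℝ // p.1 ≤ p.2},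
          ((w / c₁) * (μ₁ - lam.1.1) ^ 2 / 2 +
            ((1 - w) / c₂) * (μ₂ - lam.1.2) ^ 2 / 2)}
      ((μ₁ - μ₂) ^ 2 / (2 * (Real.sqrt c₁ + Real.sqrt c₂) ^ 2)) ∧
    (⨅ lam : {p : ℝ × ℝ // p.1 ≤ p.2},
        ((Real.sqrt c₁ / (Real.sqrt c₁ + Real.sqrt c₂)) / c₁ * (μ₁ - lam.1.1) ^ 2 / 2 +
          ((1 - Real.sqrt c₁ / (Real.sqrt c₁ + Real.sqrt c₂)) / c₂) * (μ₂ - lam.1.2) ^ 2 / 2))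
      = (μ₁ - μ₂) ^ 2 / (2 * (Real.sqrt c₁ + Real.sqrt c₂) ^ 2) := by
  set u := Real.sqrt c₁ with hu
  set v := Real.sqrt c₂ with hv
  have hu0 : 0 < u := Real.sqrt_pos.mpr hc₁
  have hv0 : 0 < v := Real.sqrt_pos.mpr hc₂
  have hu2 : u ^ 2 = c₁ := Real.sq_sqrt hc₁.le
  have hv2 : v ^ 2 = c₂ := Real.sq_sqrt hc₂.le
  have hs : 0 < u + v := by linarith
  have hsne : u + v ≠ 0 := ne_of_gt hs
  -- the value at the optimal weight
  have hval : (⨅ lam : {p : ℝ × ℝ // p.1 ≤ p.2},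
        ((u / (u + v)) / c₁ * (μ₁ - lam.1.1) ^ 2 / 2 +
          ((1 - u / (u + v)) / c₂) * (μ₂ - lam.1.2) ^ 2 / 2))
      = (μ₁ - μ₂) ^ 2 / (2 * (u + v) ^ 2) := by
    have hA : 0 ≤ (u / (u + v)) / c₁ := by positivity
    have hB : 0 ≤ (1 - u / (u + v)) / c₂ := by
      have : u / (u + v) ≤ 1 := by
        rw [div_le_one hs]; linarith
      have h1 : 0 ≤ 1 - u / (u + v) := by linarith
      positivity
    have hAB : 0 < (u / (u + v)) / c₁ + (1 - u / (u + v)) / c₂ := by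
      have : 0 < (u / (u + v)) / c₁ := by positivity
      linarith
    rw [inf_eq_aux μ₁ μ₂ _ _ hμ hA hB hAB]
    rw [← hu2, ← hv2]
    have hne : u * v + v ^ 2 ≠ 0 := by positivity
    field_simp
    ring_nf
    field_simp
    ring
  refine ⟨⟨⟨u / (u + v), ⟨by positivity, by rw [div_le_one hs]; linarith⟩, hval.symm⟩, ?_⟩, hval⟩
  -- upper bound
  rintro x ⟨w, ⟨hw0, hw1⟩, rfl⟩
  have hA : 0 ≤ w / c₁ := by positivity
  have hB : 0 ≤ (1 - w) / c₂ := by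
    have : 0 ≤ 1 - w := by linarith
    positivity
  have hAB : 0 < w / c₁ + (1 - w) / c₂ := by
    rcases lt_or_ge 0 w with h | h
    · have : 0 < w / c₁ := by positivity
      linarith
    · have hw : w = 0 := le_antisymm h hw0
      have : 0 < (1 - w) / c₂ := by rw [hw]; positivity
      linarith
  rw [inf_eq_aux μ₁ μ₂ _ _ hμ hA hB hAB]
  -- need (w/c₁)((1-w)/c₂)/((w/c₁)+((1-w)/c₂)) ≤ 1/(u+v)^2, scaled by Δ²/2
  have hD : 0 < w * c₂ + (1 - w) * c₁ := by
    rcases eq_or_lt_of_le hw0 with h | h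
    · rw [← h]; simpa using hc₁
    · have : 0 ≤ (1 - w) * c₁ := mul_nonneg (by linarith) hc₁.le
      nlinarith
  have hratio : (w / c₁) * ((1 - w) / c₂) / (w / c₁ + (1 - w) / c₂)
      = w * (1 - w) / (w * c₂ + (1 - w) * c₁) := by
    rw [div_eq_div_iff hAB.ne' hD.ne']
    field_simp
  rw [hratio]
  have hfin : w * (1 - w) / (w * c₂ + (1 - w) * c₁) ≤ 1 / (u + v) ^ 2 := by
    rw [div_le_div_iff₀ hD (by positivity)]
    nlinarith [sq_nonneg (w * v - (1 - w) * u)]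
  calc w * (1 - w) / (w * c₂ + (1 - w) * c₁) * (μ₁ - μ₂) ^ 2 / 2
      ≤ 1 / (u + v) ^ 2 * (μ₁ - μ₂) ^ 2 / 2 := by gcongr
    _ = (μ₁ - μ₂) ^ 2 / (2 * (u + v) ^ 2) := by
        rw [div_mul_eq_mul_div, one_mul, div_div, mul_comm]
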